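/- arXiv:2210.01230 — 2 statements merged into one kernel-verified Lean document; each statement's English description precedes it below -/
import Mathlib

section
/- Record sampling representation of recall: if a random record i is drawn from D with probabilities p_i > 0, then pairwise recall R = 2·E[ f(c(i), 𝒞̂) / (|c(i)|·p_i) ] / E[ (|c(i)| − 1) / p_i ], provided the true clustering has at least one non-singleton cluster. -/
open Finset

/-- The set of unordered pairs of distinct elements lying in a common block of `P`. -/
def clPairs {α : Type*} [DecidableEq α] (P : Finset (Finset α)) : Finset (Sym2 α) :=
  (P.sup fun c => c.sym2).filter (fun p => ¬ p.IsDiag)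

/-- The block of the partition `P` containing `i`. -/
def partOf {α : Type*} [DecidableEq α] (P : Finset (Finset α)) (i : α) : Finset α :=
  (P.filter (fun c => i ∈ c)).sup id

/-- `f(c, 𝒞̂) = Σ_{ĉ ∈ 𝒞̂} C(|c ∩ ĉ|, 2)`, real-valued. -/
noncomputable def ffun {α : Type*} [DecidableEq α] (Cp : Finset (Finset α)) (c : Finset α) : ℝ :=
  ∑ d ∈ Cp, ((c ∩ d).card.choose 2 : ℝ)

/-- `g(c, 𝒞̂) = f(c, 𝒞̂) / Σ_{ĉ ∈ 𝒞̂} C(|ĉ|, 2)`. -/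
noncomputable def gfun {α : Type*} [DecidableEq α] (Cp : Finset (Finset α)) (c : Finset α) : ℝ :=
  ffun Cp c / (∑ d ∈ Cp, (d.card.choose 2 : ℝ))

lemma card_sym2_offdiag {α : Type*} [DecidableEq α] (s : Finset α) :
    (s.sym2.filter (fun p => ¬ p.IsDiag)).card = s.card.choose 2 := by
  have hdiag : s.sym2.filter (fun p => p.IsDiag) = s.image Sym2.diag := by
    ext p
    induction p using Sym2.ind with
    | _ x y =>
      simp only [mem_filter, mk_mem_sym2_iff, Sym2.mk_isDiag_iff, mem_image]
      constructor
      · rintro ⟨⟨hx, hy⟩, rfl⟩; exact ⟨x, hx, rfl⟩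
      · rintro ⟨a, ha, h⟩
        simp only [Sym2.diag, Sym2.eq_iff] at h
        rcases h with ⟨rfl, rfl⟩ | ⟨rfl, rfl⟩ <;> exact ⟨⟨ha, ha⟩, rfl⟩
  have h1 := Finset.card_filter_add_card_filter_not
    (s := s.sym2) (p := fun p => p.IsDiag)
  rw [hdiag, Finset.card_image_of_injective _ Sym2.diag_injective, Finset.card_sym2] at h1
  have h2 : (s.card + 1).choose 2 = s.card + s.card.choose 2 := by
    rw [Nat.choose_succ_succ, Nat.choose_one_right]
  omega

lemma clPairs_card {α : Type*} [DecidableEq α] (P : Finset (Finset α))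
    (hdisj : (P : Set (Finset α)).PairwiseDisjoint id) :
    (clPairs P).card = ∑ c ∈ P, c.card.choose 2 := by
  unfold clPairs
  rw [Finset.sup_eq_biUnion, Finset.filter_biUnion, Finset.card_biUnion]
  · exact Finset.sum_congr rfl fun c _ => card_sym2_offdiag c
  · intro c hc d hd hne
    rw [Function.onFun, Finset.disjoint_left]
    intro p hp hq
    induction p using Sym2.ind with
    | _ x y =>
      simp only [mem_filter, mk_mem_sym2_iff] at hp hq
      exact Finset.disjoint_left.1 (hdisj hc hd hne) hp.1.1 hq.1.1

lemma clPairs_inter_card {α : Type*} [DecidableEq α] (P Q : Finset (Finset α))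
    (hP : (P : Set (Finset α)).PairwiseDisjoint id)
    (hQ : (Q : Set (Finset α)).PairwiseDisjoint id) :
    (clPairs P ∩ clPairs Q).card = ∑ c ∈ P, ∑ d ∈ Q, (c ∩ d).card.choose 2 := by
  have key : clPairs P ∩ clPairs Q
      = (P ×ˢ Q).biUnion (fun cd => ((cd.1 ∩ cd.2).sym2.filter (fun p => ¬ p.IsDiag))) := by
    ext p
    induction p using Sym2.ind with
    | _ x y =>
      simp only [clPairs, mem_inter, mem_filter, Finset.mem_sup, mem_biUnion, mem_product,
        mk_mem_sym2_iff, Finset.mem_inter, Prod.exists]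
      constructor
      · rintro ⟨⟨⟨c, hc, hx⟩, hnd⟩, ⟨d, hd, hx'⟩, _⟩
        exact ⟨c, d, ⟨hc, hd⟩, ⟨⟨hx.1, hx'.1⟩, hx.2, hx'.2⟩, hnd⟩
      · rintro ⟨c, d, ⟨hc, hd⟩, ⟨⟨hx1, hx2⟩, hy1, hy2⟩, hnd⟩
        exact ⟨⟨⟨c, hc, hx1, hy1⟩, hnd⟩, ⟨d, hd, hx2, hy2⟩, hnd⟩
  rw [key, Finset.card_biUnion, Finset.sum_product]
  · exact Finset.sum_congr rfl fun c _ => Finset.sum_congr rfl fun d _ => card_sym2_offdiag _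
  · rintro ⟨c, d⟩ hcd ⟨c', d'⟩ hcd' hne
    simp only [Finset.mem_coe, mem_product] at hcd hcd'
    rw [Function.onFun, Finset.disjoint_left]
    intro p hp hq
    induction p using Sym2.ind with
    | _ x y =>
      simp only [mem_filter, mk_mem_sym2_iff, Finset.mem_inter] at hp hq
      rcases eq_or_ne c c' with rfl | hcc
      · rcases eq_or_ne d d' with rfl | hdd
        · exact hne rfl
        · exact Finset.disjoint_left.1 (hQ hcd.2 hcd'.2 hdd) hp.1.1.2 hq.1.1.2
      · exact Finset.disjoint_left.1 (hP hcd.1 hcd'.1 hcc) hp.1.1.1 hq.1.1.1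

lemma partOf_eq {α : Type*} [DecidableEq α] {D : Finset α} (C : Finpartition D)
    {c : Finset α} {i : α} (hc : c ∈ C.parts) (hi : i ∈ c) : partOf C.parts i = c := by
  unfold partOf
  have h : C.parts.filter (fun t => i ∈ t) = {c} := by
    ext t
    simp only [mem_filter, mem_singleton]
    constructor
    · rintro ⟨ht, hit⟩; exact C.eq_of_mem_parts ht hc hit hi
    · rintro rfl; exact ⟨hc, hi⟩
  rw [h, Finset.sup_singleton, id]

lemma sum_over_D {α : Type*} [DecidableEq α] {D : Finset α} (C : Finpartition D)
    (F : Finset α → ℝ) :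
    ∑ i ∈ D, F (partOf C.parts i) = ∑ c ∈ C.parts, (c.card : ℝ) * F c := by
  have hD : D = C.parts.biUnion id := by rw [← Finset.sup_eq_biUnion, C.sup_parts]
  rw [Finset.sum_congr hD (fun x _ => rfl),
    Finset.sum_biUnion C.supIndep.pairwiseDisjoint]
  refine Finset.sum_congr rfl fun c hc => ?_
  rw [Finset.sum_congr rfl (fun i hi => by rw [partOf_eq C hc hi])]
  simp [mul_comm]

theorem stmt4 {α : Type*} [DecidableEq α] (D : Finset α) (C Cp : Finpartition D)
    (p : α → ℝ) (hp : ∀ i ∈ D, 0 < p i) (hsum : ∑ i ∈ D, p i = 1)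
    (hT : (clPairs C.parts).Nonempty) :
    ((clPairs C.parts ∩ clPairs Cp.parts).card : ℝ) / (clPairs C.parts).card
      = 2 * (∑ i ∈ D, p i *
              (ffun Cp.parts (partOf C.parts i) / ((partOf C.parts i).card * p i)))
          / (∑ i ∈ D, p i * ((((partOf C.parts i).card : ℝ) - 1) / p i)) := by
  have hdC := C.supIndep.pairwiseDisjoint
  have hdCp := Cp.supIndep.pairwiseDisjoint
  have hpart : ∀ i ∈ D, i ∈ partOf C.parts i ∧ partOf C.parts i ∈ C.parts := by
    intro i hi
    obtain ⟨c, hc, hic⟩ := C.exists_mem hi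
    rw [partOf_eq C hc hic]
    exact ⟨hic, hc⟩
  -- numerator rewrite
  have hnum : ∑ i ∈ D, p i *
      (ffun Cp.parts (partOf C.parts i) / ((partOf C.parts i).card * p i))
      = ∑ c ∈ C.parts, ffun Cp.parts c := by
    have step : ∀ i ∈ D, p i *
        (ffun Cp.parts (partOf C.parts i) / ((partOf C.parts i).card * p i))
        = ffun Cp.parts (partOf C.parts i) / ((partOf C.parts i).card : ℝ) := by
      intro i hi
      have hpi : p i ≠ 0 := (hp i hi).ne'
      have hcpos : (0 : ℝ) < (partOf C.parts i).card := by
        exact_mod_cast Finset.card_pos.2 ⟨i, (hpart i hi).1⟩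
      field_simp
    rw [Finset.sum_congr rfl step, sum_over_D C (fun c => ffun Cp.parts c / (c.card : ℝ))]
    refine Finset.sum_congr rfl fun c hc => ?_
    have hcpos : ((c.card : ℝ)) ≠ 0 := by
      have := Finset.card_pos.2 (C.nonempty_of_mem_parts hc)
      positivity
    field_simp
  -- denominator rewrite
  have hden : ∑ i ∈ D, p i * ((((partOf C.parts i).card : ℝ) - 1) / p i)
      = 2 * ∑ c ∈ C.parts, (c.card.choose 2 : ℝ) := by
    have step : ∀ i ∈ D, p i * ((((partOf C.parts i).card : ℝ) - 1) / p i)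
        = (((partOf C.parts i).card : ℝ) - 1) := by
      intro i hi
      have hpi : p i ≠ 0 := (hp i hi).ne'
      field_simp
    rw [Finset.sum_congr rfl step, sum_over_D C (fun c => (c.card : ℝ) - 1),
      Finset.mul_sum]
    refine Finset.sum_congr rfl fun c hc => ?_
    have h1 : 1 ≤ c.card := Finset.card_pos.2 (C.nonempty_of_mem_parts hc)
    have hnat : c.card * (c.card - 1) = 2 * c.card.choose 2 := by
      rw [Nat.choose_two_right, Nat.mul_div_cancel']
      have : Even ((c.card - 1) * (c.card - 1 + 1)) := Nat.even_mul_succ_self _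
      rw [Nat.sub_add_cancel h1, mul_comm] at this
      exact this.two_dvd
    have := congrArg (fun n : ℕ => (n : ℝ)) hnat
    push_cast [h1] at this
    linarith [this]
  rw [hnum, hden]
  have hTpos : (0 : ℝ) < ∑ c ∈ C.parts, (c.card.choose 2 : ℝ) := by
    have := Finset.card_pos.2 hT
    rw [clPairs_card C.parts hdC] at this
    exact_mod_cast this
  rw [clPairs_inter_card C.parts Cp.parts hdC hdCp, clPairs_card C.parts hdC,
    mul_div_mul_left _ _ (two_ne_zero)]
  unfold ffun
  push_cast
  rfl
end

section
/- Block sampling representation of precision: if blocks b are drawn from a partition 𝓑 of D (with every true cluster contained in a block) with probabilities proportional to p_b > 0, then P = E[ |𝒯_b ∩ 𝒫_b| / p_b ] / E[ ( |𝒫_b| + ½ |𝒫_b⁻| ) / p_b ], provided |𝒫| > 0. -/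
open Finset

lemma mem_clPairs {α : Type*} [DecidableEq α] {P : Finset (Finset α)} {q : Sym2 α} :
    q ∈ clPairs P ↔ (∃ c ∈ P, q ∈ c.sym2) ∧ ¬ q.IsDiag := by
  simp [clPairs, Finset.mem_sup]

lemma card_filter_real {β : Type*} (X : Finset β) (p : β → Prop)
    [DecidablePred p] :
    ((X.filter p).card : ℝ) = ∑ q ∈ X, (if p q then (1 : ℝ) else 0) := by
  rw [Finset.card_filter]
  push_cast
  rfl

theorem stmt11 {α : Type*} [DecidableEq α] (D : Finset α) (C Cp B : Finpartition D)
    (hB : ∀ c ∈ C.parts, ∃ b ∈ B.parts, c ⊆ b)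
    (T Pp : Finset (Sym2 α)) (hT : T = clPairs C.parts) (hPp : Pp = clPairs Cp.parts)
    (hPpos : Pp.Nonempty)
    (w : Finset α → ℝ) (hw : ∀ b ∈ B.parts, 0 < w b)
    (S : ℝ) (hS : S = ∑ b ∈ B.parts, w b) :
    ((T ∩ Pp).card : ℝ) / Pp.card
      = (∑ b ∈ B.parts, (w b / S) *
            ((((T.filter (fun q => q ∈ b.sym2)) ∩ (Pp.filter (fun q => q ∈ b.sym2))).card : ℝ)
              / w b))
        / (∑ b ∈ B.parts, (w b / S) *
            ((((Pp.filter (fun q => q ∈ b.sym2)).card : ℝ)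
                + (1 / 2) * ((Pp.filter (fun q => q ∉ b.sym2 ∧ q ∉ (D \ b).sym2)).card : ℝ))
              / w b)) := by
  have hSpos : 0 < S := by
    rw [hS]
    have hne : B.parts.Nonempty := by
      obtain ⟨q, hq⟩ := hPpos
      rw [hPp, mem_clPairs] at hq
      obtain ⟨⟨c, hc, hqc⟩, hnd⟩ := hq
      obtain ⟨x, y⟩ := q
      rw [Finset.mk_mem_sym2_iff] at hqc
      have hxD : x ∈ D := Cp.le hc hqc.1
      exact ⟨B.part x, B.part_mem.mpr hxD⟩
    exact Finset.sum_pos hw hne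
  have hS0 : S ≠ 0 := ne_of_gt hSpos
  -- endpoints of Pp pairs lie in D and are distinct
  have hPpD : ∀ {x y : α}, s(x, y) ∈ Pp → x ∈ D ∧ y ∈ D ∧ x ≠ y := by
    intro x y hq
    rw [hPp, mem_clPairs] at hq
    obtain ⟨⟨c, hc, hqc⟩, hnd⟩ := hq
    rw [Finset.mk_mem_sym2_iff] at hqc
    exact ⟨Cp.le hc hqc.1, Cp.le hc hqc.2, fun h => hnd (by simp [h])⟩
  -- key sum 1 : numerator counts
  have hnum : ∑ b ∈ B.parts, (((T.filter (fun q => q ∈ b.sym2)) ∩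
        (Pp.filter (fun q => q ∈ b.sym2))).card : ℝ) = ((T ∩ Pp).card : ℝ) := by
    have hrw : ∀ b : Finset α, (T.filter (fun q => q ∈ b.sym2)) ∩
        (Pp.filter (fun q => q ∈ b.sym2)) = (T ∩ Pp).filter (fun q => q ∈ b.sym2) := by
      intro b
      ext q
      simp only [Finset.mem_filter, Finset.mem_inter]
      tauto
    calc ∑ b ∈ B.parts, (((T.filter (fun q => q ∈ b.sym2)) ∩
            (Pp.filter (fun q => q ∈ b.sym2))).card : ℝ)
        = ∑ b ∈ B.parts, ∑ q ∈ T ∩ Pp, (if q ∈ b.sym2 then (1 : ℝ) else 0) := by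
          refine Finset.sum_congr rfl fun b _ => ?_
          rw [hrw b, card_filter_real]
      _ = ∑ q ∈ T ∩ Pp, ∑ b ∈ B.parts, (if q ∈ b.sym2 then (1 : ℝ) else 0) :=
          Finset.sum_comm
      _ = ∑ q ∈ T ∩ Pp, (1 : ℝ) := by
          refine Finset.sum_congr rfl fun q hq => ?_
          have hqT : q ∈ T := (Finset.mem_inter.mp hq).1
          rw [hT, mem_clPairs] at hqT
          obtain ⟨⟨c, hc, hqc⟩, hnd⟩ := hqT
          obtain ⟨x, y⟩ := q
          rw [Finset.mk_mem_sym2_iff] at hqc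
          obtain ⟨b0, hb0, hcb0⟩ := hB c hc
          have hxb0 : x ∈ b0 := hcb0 hqc.1
          have hyb0 : y ∈ b0 := hcb0 hqc.2
          rw [Finset.sum_eq_single_of_mem b0 hb0]
          · simp [Finset.mk_mem_sym2_iff, hxb0, hyb0]
          · intro b hb hne
            have : s(x, y) ∉ b.sym2 := by
              rw [Finset.mk_mem_sym2_iff]
              rintro ⟨hxb, -⟩
              exact hne (B.eq_of_mem_parts hb hb0 hxb hxb0)
            simp [this]
      _ = ((T ∩ Pp).card : ℝ) := by simp
  -- key sum 2 : denominator counts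
  have hden : ∑ b ∈ B.parts, ((((Pp.filter (fun q => q ∈ b.sym2)).card : ℝ)
        + (1 / 2) * ((Pp.filter (fun q => q ∉ b.sym2 ∧ q ∉ (D \ b).sym2)).card : ℝ)))
      = (Pp.card : ℝ) := by
    calc ∑ b ∈ B.parts, ((((Pp.filter (fun q => q ∈ b.sym2)).card : ℝ)
            + (1 / 2) * ((Pp.filter (fun q => q ∉ b.sym2 ∧ q ∉ (D \ b).sym2)).card : ℝ)))
        = ∑ b ∈ B.parts, ∑ q ∈ Pp, ((if q ∈ b.sym2 then (1 : ℝ) else 0)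
            + (1 / 2) * (if q ∉ b.sym2 ∧ q ∉ (D \ b).sym2 then (1 : ℝ) else 0)) := by
          refine Finset.sum_congr rfl fun b _ => ?_
          rw [card_filter_real, card_filter_real, Finset.mul_sum, ← Finset.sum_add_distrib]
      _ = ∑ q ∈ Pp, ∑ b ∈ B.parts, ((if q ∈ b.sym2 then (1 : ℝ) else 0)
            + (1 / 2) * (if q ∉ b.sym2 ∧ q ∉ (D \ b).sym2 then (1 : ℝ) else 0)) :=
          Finset.sum_comm
      _ = ∑ q ∈ Pp, (1 : ℝ) := by
          refine Finset.sum_congr rfl fun q hq => ?_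
          obtain ⟨x, y⟩ := q
          obtain ⟨hxD, hyD, hxy⟩ := hPpD hq
          set bx := B.part x with hbxdef
          set by' := B.part y with hbydef
          have hbx : bx ∈ B.parts := B.part_mem.mpr hxD
          have hby : by' ∈ B.parts := B.part_mem.mpr hyD
          have hxbx : x ∈ bx := B.mem_part hxD
          have hyby : y ∈ by' := B.mem_part hyD
          by_cases hb : bx = by'
          · -- both endpoints in the same block
            rw [Finset.sum_eq_single_of_mem bx hbx]
            · have h1 : s(x, y) ∈ bx.sym2 := by
                rw [Finset.mk_mem_sym2_iff]
                exact ⟨hxbx, hb ▸ hyby⟩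
              simp [h1]
            · intro b hbB hne
              have hxnb : x ∉ b := fun hxb => hne (B.eq_of_mem_parts hbB hbx hxb hxbx)
              have hynb : y ∉ b := fun hyb => hne (B.eq_of_mem_parts hbB hby hyb hyby ▸ hb.symm)
              have h1 : s(x, y) ∉ b.sym2 := by
                rw [Finset.mk_mem_sym2_iff]; rintro ⟨h, -⟩; exact hxnb h
              have h2 : s(x, y) ∈ (D \ b).sym2 := by
                rw [Finset.mk_mem_sym2_iff]
                exact ⟨Finset.mem_sdiff.mpr ⟨hxD, hxnb⟩, Finset.mem_sdiff.mpr ⟨hyD, hynb⟩⟩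
              simp [h1, h2]
          · -- endpoints in different blocks
            have hptwise : ∀ b ∈ B.parts,
                ((if s(x, y) ∈ b.sym2 then (1 : ℝ) else 0)
                  + (1 / 2) * (if s(x, y) ∉ b.sym2 ∧ s(x, y) ∉ (D \ b).sym2 then (1 : ℝ) else 0))
                = (1 / 2) * (if b = bx then (1 : ℝ) else 0)
                  + (1 / 2) * (if b = by' then (1 : ℝ) else 0) := by
              intro b hbB
              have h1 : s(x, y) ∉ b.sym2 := by
                rw [Finset.mk_mem_sym2_iff]
                rintro ⟨hxb, hyb⟩
                exact hb ((B.eq_of_mem_parts hbx hbB hxbx hxb).trans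
                  (B.eq_of_mem_parts hbB hby hyb hyby))
              have h2 : (s(x, y) ∉ (D \ b).sym2) ↔ (b = bx ∨ b = by') := by
                rw [Finset.mk_mem_sym2_iff]
                constructor
                · intro h
                  by_cases hxb : x ∈ b
                  · exact Or.inl (B.eq_of_mem_parts hbB hbx hxb hxbx)
                  · by_cases hyb : y ∈ b
                    · exact Or.inr (B.eq_of_mem_parts hbB hby hyb hyby)
                    · exact absurd ⟨Finset.mem_sdiff.mpr ⟨hxD, hxb⟩,
                        Finset.mem_sdiff.mpr ⟨hyD, hyb⟩⟩ h
                · rintro (rfl | rfl) h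
                  · exact (Finset.mem_sdiff.mp h.1).2 hxbx
                  · exact (Finset.mem_sdiff.mp h.2).2 hyby
              have hcond : (s(x, y) ∉ b.sym2 ∧ s(x, y) ∉ (D \ b).sym2)
                  ↔ (b = bx ∨ b = by') := ⟨fun h => h2.mp h.2, fun h => ⟨h1, h2.mpr h⟩⟩
              simp only [if_neg h1, hcond]
              by_cases e1 : b = bx <;> by_cases e2 : b = by'
              · exact absurd (e1.symm.trans e2) hb
              · simp only [e1, e2]
                simp [hb]
              · simp only [e1, e2]
                have : ¬by' = bx := fun h => hb h.symm
                simp [this]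
              · simp [e1, e2]
            rw [Finset.sum_congr rfl hptwise, Finset.sum_add_distrib,
              ← Finset.mul_sum, ← Finset.mul_sum,
              Finset.sum_ite_eq' B.parts bx (fun _ => (1 : ℝ)),
              Finset.sum_ite_eq' B.parts by' (fun _ => (1 : ℝ))]
            simp [hbx, hby]
            ring
      _ = (Pp.card : ℝ) := by simp
  -- simplify weights
  have hterm : ∀ (h : Finset α → ℝ), ∀ b ∈ B.parts,
      (w b / S) * (h b / w b) = h b / S := by
    intro h b hb
    have hw0 : w b ≠ 0 := ne_of_gt (hw b hb)
    field_simp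
  rw [Finset.sum_congr rfl (hterm (fun b => (((T.filter (fun q => q ∈ b.sym2)) ∩
        (Pp.filter (fun q => q ∈ b.sym2))).card : ℝ))),
      Finset.sum_congr rfl (hterm (fun b => (((Pp.filter (fun q => q ∈ b.sym2)).card : ℝ)
        + (1 / 2) * ((Pp.filter (fun q => q ∉ b.sym2 ∧ q ∉ (D \ b).sym2)).card : ℝ))))]
  rw [← Finset.sum_div, ← Finset.sum_div, hnum, hden]
  have hPcard : ((Pp.card : ℝ)) ≠ 0 := by
    simp [Finset.card_ne_zero_of_mem hPpos.choose_spec]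
  field_simp
end
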